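/- Let R be a real closed field with natural valuation v and value group Γ. Let (A₁,B₁) and (A₂,B₂) be distinct proper cuts of R with A₁ ⊆ A₂, let P₁, P₂ be the corresponding orderings of R(X), let Sᵢ = {v(b−a) : a ∈ Aᵢ, b ∈ Bᵢ} and U = {v(a′−a) : a, a′ ∈ B₁ ∩ A₂, a < a′}. If S₁ = S₂ = S and S ∩ U ≠ ∅, then λ_{P₁} ≠ λ_{P₂} as functions R(X) → ℝ ∪ {∞}. -/

import Mathlib

attribute [local instance] Classical.propDecidable

/-- An ordering of a field `K`: `P + P ⊆ P`, `P·P ⊆ P`, `P ∪ (−P) = K`, `P ∩ (−P) = {0}`. -/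
def IsOrdering {K : Type*} [Field K] (P : Set K) : Prop :=
  (∀ x ∈ P, ∀ y ∈ P, x + y ∈ P) ∧ (∀ x ∈ P, ∀ y ∈ P, x * y ∈ P) ∧
    (∀ x : K, x ∈ P ∨ -x ∈ P) ∧ (∀ x : K, x ∈ P → -x ∈ P → x = 0)

/-- The valuation ring `A(P) = {x : ∃ q ∈ ℚ, q > 0, q − x ∈ P and q + x ∈ P}` of an ordering. -/
def orderValRing {K : Type*} [Field K] (P : Set K) : Set K :=
  {x : K | ∃ q : ℚ, 0 < q ∧ (q : K) - x ∈ P ∧ (q : K) + x ∈ P}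

/-- The ℝ-place `λ_P : K → ℝ ∪ {∞}` associated to an ordering `P`:
`λ_P(x) = sup {q ∈ ℚ : x − q ∈ P}` for `x ∈ A(P)` and `∞` otherwise. -/
noncomputable def rPlace {K : Type*} [Field K] (P : Set K) (x : K) : WithTop ℝ :=
  if x ∈ orderValRing P then
    ((sSup {r : ℝ | ∃ q : ℚ, r = (q : ℝ) ∧ x - (q : K) ∈ P} : ℝ) : WithTop ℝ)
  else ⊤

/-- The ordering of the rational function field `R(X)` determined by a proper cut `(A,B)` of `R`:
a nonzero `f` is in the ordering iff there are `a ∈ A`, `b ∈ B` such that `f` is defined with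
positive values throughout `(a,b)`. -/
def cutOrdering {R : Type*} [Field R] [LinearOrder R] [IsStrictOrderedRing R] (A B : Set R) : Set (RatFunc R) :=
  {f : RatFunc R | f = 0 ∨ ∃ a ∈ A, ∃ b ∈ B, ∀ c : R, a < c → c < b →
    Polynomial.eval c f.denom ≠ 0 ∧ 0 < RatFunc.eval (RingHom.id R) c f}

section Aux
variable {R : Type*} [Field R] [LinearOrder R] [IsStrictOrderedRing R]

lemma ratCast_eq_algebraMapC (q : ℚ) :
    (q : RatFunc R) = algebraMap (Polynomial R) (RatFunc R) (Polynomial.C (q : R)) := by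
  rw [← Polynomial.algebraMap_eq, ← IsScalarTower.algebraMap_apply R (Polynomial R) (RatFunc R)]
  exact (map_ratCast (algebraMap R (RatFunc R)) q).symm

lemma ratfunc_eval_algebraMap (p : Polynomial R) (c : R) :
    RatFunc.eval (RingHom.id R) c (algebraMap (Polynomial R) (RatFunc R) p) = p.eval c := by
  rw [RatFunc.eval_algebraMap]; rfl

lemma algebraMap_injective' : Function.Injective (algebraMap (Polynomial R) (RatFunc R)) :=
  IsFractionRing.injective _ _

lemma mem_cutOrdering_of_poly {A B : Set R} (p : Polynomial R) {c b : R} (hc : c ∈ A) (hb : b ∈ B)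
    (h : ∀ x, c < x → x < b → 0 < p.eval x) :
    algebraMap (Polynomial R) (RatFunc R) p ∈ cutOrdering A B := by
  right
  refine ⟨c, hc, b, hb, fun x hx1 hx2 => ⟨?_, ?_⟩⟩
  · rw [RatFunc.denom_algebraMap]; simp
  · rw [ratfunc_eval_algebraMap]; exact h x hx1 hx2

lemma exists_pos_eval {A B : Set R} (hlt : ∀ a ∈ A, ∀ b ∈ B, a < b)
    {p : Polynomial R} (hp0 : p ≠ 0)
    (hp : algebraMap (Polynomial R) (RatFunc R) p ∈ cutOrdering A B)
    {c b : R} (hc : c ∈ A) (hb : b ∈ B) :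
    ∃ x, c < x ∧ x < b ∧ 0 < p.eval x := by
  rcases hp with h0 | ⟨c', hc', b', hb', h⟩
  · exact absurd (algebraMap_injective' (by simpa using h0)) hp0
  · set e := (max c c' + min b b') / 2 with he
    have h1 : max c c' < min b b' := by
      rcases max_cases c c' with ⟨hm, _⟩ | ⟨hm, _⟩ <;> rw [hm, lt_min_iff] <;>
        exact ⟨hlt _ ‹_› _ hb, hlt _ ‹_› _ hb'⟩
    have he1 : max c c' < e := by rw [he]; linarith
    have he2 : e < min b b' := by rw [he]; linarith
    have h2 := h e (lt_of_le_of_lt (le_max_right _ _) he1) (lt_of_lt_of_le he2 (min_le_right _ _))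
    rw [ratfunc_eval_algebraMap] at h2
    exact ⟨e, lt_of_le_of_lt (le_max_left _ _) he1, lt_of_lt_of_le he2 (min_le_left _ _), h2.2⟩

end Aux

/-- if `S₁ = S₂ = S` and `S ∩ U ≠ ∅` then the ℝ-places of the orderings
of `R(X)` corresponding to the two distinct cuts differ. -/
theorem places_differ_of_S_inter_U_nonempty {R Γ : Type*} [Field R] [LinearOrder R] [IsStrictOrderedRing R] [AddCommGroup Γ] [LinearOrder Γ] [IsOrderedAddMonoid Γ]
    -- R is real closed:
    (hsq : ∀ a : R, 0 ≤ a → ∃ b : R, b * b = a)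
    (hodd : ∀ p : Polynomial R, Odd p.natDegree → ∃ x : R, p.eval x = 0)
    -- v is the natural valuation of R with value group Γ:
    (v : R → Γ)
    (hv_surj : ∀ γ : Γ, ∃ a : R, a ≠ 0 ∧ v a = γ)
    (hv_mul : ∀ a b : R, a ≠ 0 → b ≠ 0 → v (a * b) = v a + v b)
    (hv_le : ∀ a b : R, a ≠ 0 → b ≠ 0 → (v b ≤ v a ↔ ∃ n : ℕ, |a| ≤ (n : R) * |b|))
    -- (A₁,B₁) and (A₂,B₂) are proper cuts of R:
    (A₁ B₁ A₂ B₂ : Set R)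
    (hcut₁ : A₁ ∪ B₁ = Set.univ) (hdisj₁ : A₁ ∩ B₁ = ∅)
    (hlt₁ : ∀ a ∈ A₁, ∀ b ∈ B₁, a < b)
    (hcut₂ : A₂ ∪ B₂ = Set.univ) (hdisj₂ : A₂ ∩ B₂ = ∅)
    (hlt₂ : ∀ a ∈ A₂, ∀ b ∈ B₂, a < b)
    (hA₁ : A₁.Nonempty) (hB₁ : B₁.Nonempty) (hA₂ : A₂.Nonempty) (hB₂ : B₂.Nonempty)
    (hsub : A₁ ⊆ A₂) (hdistinct : A₁ ≠ A₂)
    (S₁ S₂ : Set Γ)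
    (hS₁ : S₁ = {γ : Γ | ∃ a ∈ A₁, ∃ b ∈ B₁, γ = v (b - a)})
    (hS₂ : S₂ = {γ : Γ | ∃ a ∈ A₂, ∃ b ∈ B₂, γ = v (b - a)})
    (U : Set Γ)
    (hU : U = {γ : Γ | ∃ a ∈ B₁ ∩ A₂, ∃ a' ∈ B₁ ∩ A₂, a < a' ∧ γ = v (a' - a)})
    (S : Set Γ) (hSeq₁ : S₁ = S) (hSeq₂ : S₂ = S)
    (hSU : (S ∩ U).Nonempty) :
    rPlace (cutOrdering A₁ B₁) ≠ rPlace (cutOrdering A₂ B₂) := by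
  obtain ⟨γ, hγS, hγU⟩ := hSU
  rw [hU] at hγU
  obtain ⟨a, ha, a', ha', haa', hγ1⟩ := hγU
  rw [← hSeq₁, hS₁] at hγS
  obtain ⟨cc, hcc, bb, hbb, hγ2⟩ := hγS
  -- the point a₀
  set a₀ := min a bb with ha₀def
  have ha₀B₁ : a₀ ∈ B₁ := by
    rcases min_cases a bb with ⟨h, _⟩ | ⟨h, _⟩ <;> rw [ha₀def, h]
    exacts [ha.1, hbb]
  have ha₀A₂ : a₀ ∈ A₂ := by
    rcases le_total a bb with h | h
    · rw [ha₀def, min_eq_left h]; exact ha.2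
    · rw [ha₀def, min_eq_right h]
      have hmem : bb ∈ A₂ ∪ B₂ := by rw [hcut₂]; exact Set.mem_univ bb
      rcases hmem with h2 | h2
      · exact h2
      · exact absurd (hlt₂ _ ha.2 _ h2) (not_lt.mpr h)
  have ha₀a' : a₀ < a' := lt_of_le_of_lt (min_le_left _ _) haa'
  set k := a' - a₀ with hkdef
  have hk : 0 < k := sub_pos.mpr ha₀a'
  have hkinv : 0 < k⁻¹ := inv_pos.mpr hk
  have hcca₀ : cc < a₀ := hlt₁ _ hcc _ ha₀B₁
  have hccbb : cc < bb := hlt₁ _ hcc _ hbb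
  -- valuation bound
  obtain ⟨n, hn⟩ := (hv_le (bb - cc) (a' - a) (sub_ne_zero.mpr hccbb.ne')
      (sub_ne_zero.mpr haa'.ne')).mp (le_of_eq (hγ1 ▸ hγ2))
  have hbound : a₀ - cc ≤ (n : R) * k := by
    rw [abs_of_pos (sub_pos.mpr hccbb), abs_of_pos (sub_pos.mpr haa')] at hn
    have h1 : a₀ - cc ≤ bb - cc := by
      have := min_le_right a bb; linarith
    have h2 : (n : R) * (a' - a) ≤ (n : R) * k := by
      have h3 : a' - a ≤ k := by
        have := min_le_left a bb; rw [hkdef]; linarith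
      exact mul_le_mul_of_nonneg_left h3 (Nat.cast_nonneg n)
    linarith
  -- the polynomial and rational function
  set p : Polynomial R := Polynomial.C k⁻¹ * (Polynomial.X - Polynomial.C a₀) with hpdef
  have hpeval : ∀ x : R, p.eval x = k⁻¹ * (x - a₀) := by
    intro x; simp [hpdef]
  set F : RatFunc R := algebraMap (Polynomial R) (RatFunc R) p with hFdef
  -- nonvanishing of p - C r
  have hpne : ∀ r : R, p - Polynomial.C r ≠ 0 := by
    intro r h
    have h0 := congrArg (Polynomial.eval a₀) h
    have h1 := congrArg (Polynomial.eval a') h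
    rw [Polynomial.eval_sub, hpeval, Polynomial.eval_C, Polynomial.eval_zero] at h0 h1
    rw [sub_self, mul_zero] at h0
    rw [show k⁻¹ * (a' - a₀) = 1 from inv_mul_cancel₀ hk.ne'] at h1
    have : r = 0 := by linarith
    rw [this] at h1; norm_num at h1
  -- generic membership rewriting
  have hsubq : ∀ q : ℚ, F - (q : RatFunc R)
      = algebraMap (Polynomial R) (RatFunc R) (p - Polynomial.C (q : R)) := by
    intro q; rw [hFdef, ratCast_eq_algebraMapC, ← map_sub]
  have hsubq' : ∀ q : ℚ, (q : RatFunc R) - F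
      = algebraMap (Polynomial R) (RatFunc R) (Polynomial.C (q : R) - p) := by
    intro q; rw [hFdef, ratCast_eq_algebraMapC, ← map_sub]
  have haddq : ∀ q : ℚ, (q : RatFunc R) + F
      = algebraMap (Polynomial R) (RatFunc R) (Polynomial.C (q : R) + p) := by
    intro q; rw [hFdef, ratCast_eq_algebraMapC, ← map_add]
  -- F is in the valuation ring of P₁
  have hF1 : F ∈ orderValRing (cutOrdering A₁ B₁) := by
    refine ⟨(n : ℚ) + 1, by positivity, ?_, ?_⟩
    · rw [hsubq']
      refine mem_cutOrdering_of_poly _ hcc ha₀B₁ (fun x hx1 hx2 => ?_)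
      rw [Polynomial.eval_sub, Polynomial.eval_C, hpeval]
      have : k⁻¹ * (x - a₀) < 0 := mul_neg_of_pos_of_neg hkinv (by linarith)
      have hq : (0 : R) < ((n : ℚ) + 1 : ℚ) := by push_cast; positivity
      linarith
    · rw [haddq]
      refine mem_cutOrdering_of_poly _ hcc ha₀B₁ (fun x hx1 hx2 => ?_)
      rw [Polynomial.eval_add, Polynomial.eval_C, hpeval]
      have h1 : k⁻¹ * (a₀ - x) < k⁻¹ * (a₀ - cc) := by
        apply mul_lt_mul_of_pos_left _ hkinv; linarith
      have h2 : k⁻¹ * (a₀ - cc) ≤ (n : R) := by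
        rw [inv_mul_le_iff₀ hk]; linarith [hbound]
      have hq : (((n : ℚ) + 1 : ℚ) : R) = (n : R) + 1 := by push_cast; ring
      rw [hq]
      have : k⁻¹ * (x - a₀) = -(k⁻¹ * (a₀ - x)) := by ring
      linarith [h1, h2, this]

  -- the value of λ_{P₁}(F) is ≤ 0
  have hT₁ : sSup {r : ℝ | ∃ q : ℚ, r = (q : ℝ) ∧ F - (q : RatFunc R) ∈ cutOrdering A₁ B₁} ≤ 0 := by
    apply Real.sSup_le _ le_rfl
    rintro r ⟨q, rfl, hq⟩
    rw [hsubq] at hq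
    by_contra hqpos
    push_neg at hqpos
    have hq0 : (0 : R) ≤ (q : R) := by
      have : (0:ℝ) < (q:ℝ) := hqpos
      exact_mod_cast le_of_lt (by exact_mod_cast this : (0:ℚ) < q)
    obtain ⟨x, hx1, hx2, hx3⟩ := exists_pos_eval hlt₁ (hpne _) hq hcc ha₀B₁
    rw [Polynomial.eval_sub, Polynomial.eval_C, hpeval] at hx3
    have : k⁻¹ * (x - a₀) < 0 := mul_neg_of_pos_of_neg hkinv (by linarith)
    linarith
  -- F - 1/2 ∈ P₂
  obtain ⟨b₂, hb₂⟩ := hB₂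
  have hhalf : F - ((1/2 : ℚ) : RatFunc R) ∈ cutOrdering A₂ B₂ := by
    rw [hsubq]
    refine mem_cutOrdering_of_poly _ ha'.2 hb₂ (fun x hx1 hx2 => ?_)
    rw [Polynomial.eval_sub, Polynomial.eval_C, hpeval]
    have h1 : (1 : R) < k⁻¹ * (x - a₀) := by
      have h2 : k < x - a₀ := by rw [hkdef]; linarith
      have := mul_lt_mul_of_pos_left h2 hkinv
      rwa [inv_mul_cancel₀ hk.ne'] at this
    have : (((1/2 : ℚ)) : R) = 1/2 := by norm_num
    rw [this]; linarith
  -- main argument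
  intro heq
  have h := congrFun heq F
  rw [rPlace, rPlace, if_pos hF1] at h
  by_cases hF2 : F ∈ orderValRing (cutOrdering A₂ B₂)
  · rw [if_pos hF2] at h
    -- bound above for the P₂ sup set
    obtain ⟨q₀, hq₀pos, hq₀1, _⟩ := hF2
    rw [hsubq'] at hq₀1
    have hbdd : ∀ r ∈ {r : ℝ | ∃ q : ℚ, r = (q : ℝ) ∧ F - (q : RatFunc R) ∈ cutOrdering A₂ B₂},
        r ≤ (q₀ : ℝ) := by
      rintro r ⟨q, rfl, hq⟩
      rw [hsubq] at hq
      rcases hq₀1 with h0 | ⟨c₂, hc₂, b₂', hb₂', hpos⟩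
      · exfalso
        have hz : Polynomial.C ((q₀ : R)) - p = 0 := algebraMap_injective' (by simpa using h0)
        exact hpne (q₀ : R) (by rw [← neg_sub, hz, neg_zero])
      · obtain ⟨x, hx1, hx2, hx3⟩ := exists_pos_eval hlt₂ (hpne _) hq hc₂ hb₂'
        have h4 := (hpos x hx1 hx2).2
        rw [ratfunc_eval_algebraMap, Polynomial.eval_sub, Polynomial.eval_C, hpeval] at h4
        rw [Polynomial.eval_sub, Polynomial.eval_C, hpeval] at hx3
        have : (q : R) < (q₀ : R) := by linarith
        exact_mod_cast le_of_lt (by exact_mod_cast this : q < q₀)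
    have hmem : (1/2 : ℝ) ∈ {r : ℝ | ∃ q : ℚ, r = (q : ℝ) ∧ F - (q : RatFunc R) ∈ cutOrdering A₂ B₂} :=
      ⟨1/2, by norm_num, hhalf⟩
    have hT₂ : (1/2 : ℝ) ≤ sSup {r : ℝ | ∃ q : ℚ, r = (q : ℝ) ∧ F - (q : RatFunc R) ∈ cutOrdering A₂ B₂} :=
      le_csSup ⟨(q₀ : ℝ), hbdd⟩ hmem
    have := WithTop.coe_injective h
    linarith [hT₁, hT₂, this ▸ hT₁]
  · rw [if_neg hF2] at h
    exact WithTop.coe_ne_top h
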